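/- Assume moreover φ'(g) < 1. Define ξ_b(0) = ξ(0)(1−p)/((1−g)(1−φ'(g))), ξ_b(1) = 0, and ξ_b(l) = φ^{(l)}(g)(1−g)^{l−1}/(l! (1−φ'(g))) for l ≥ 2. Then ξ_b is a probability distribution on ℕ, and its generating function is φ_b(s) = Σ_{l≥0} ξ_b(l) s^l = s + ( φ(g + s(1−g)) − g − s(1−g) )/((1−g)(1−φ'(g))) for every s ∈ [0,1]. -/

import Mathlib

open ENNReal Finset

/-- The generating function `φ(s) = Σ_k ξ(k) s^k` of a distribution `ξ` on `ℕ`. -/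
noncomputable def pgf (ξ : ℕ → ℝ) (s : ℝ) : ℝ := ∑' k : ℕ, ξ k * s ^ k

/-- The `l`-th derivative of the generating function of `ξ` at `g`:
`φ^{(l)}(g) = Σ_{k≥l} (k!/(k-l)!) ξ(k) g^{k-l} = Σ_{j≥0} ((j+l)!/j!) ξ(j+l) g^j`. -/
noncomputable def pgfDeriv (ξ : ℕ → ℝ) (l : ℕ) (g : ℝ) : ℝ :=
  ∑' k : ℕ, ((Nat.factorial (k + l) : ℝ) / (Nat.factorial k : ℝ)) * ξ (k + l) * g ^ k

/-- The "black" offspring distribution `ξ_b` obtained from `ξ`, `p` and `g`. -/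
noncomputable def xib (ξ : ℕ → ℝ) (p g : ℝ) : ℕ → ℝ
  | 0 => ξ 0 * (1 - p) / ((1 - g) * (1 - pgfDeriv ξ 1 g))
  | 1 => 0
  | (l + 2) => pgfDeriv ξ (l + 2) g * (1 - g) ^ (l + 1) /
      ((Nat.factorial (l + 2) : ℝ) * (1 - pgfDeriv ξ 1 g))

/-- ENNReal-valued `φ^{(l)}(g)/l!`. -/
noncomputable def Tenn (ξ : ℕ → ℝ) (g : ℝ) (l : ℕ) : ℝ≥0∞ :=
  ∑' k : ℕ, ((k + l).choose l : ℝ≥0∞) * ENNReal.ofReal (ξ (k + l)) * ENNReal.ofReal g ^ k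

lemma taylor_enn (ξ : ℕ → ℝ) (g t : ℝ) (hg : 0 ≤ g) (ht : 0 ≤ t) :
    ∑' l : ℕ, Tenn ξ g l * ENNReal.ofReal t ^ l
      = ∑' n : ℕ, ENNReal.ofReal (ξ n) * ENNReal.ofReal (g + t) ^ n := by
  set G := ENNReal.ofReal g with hG
  set Tt := ENNReal.ofReal t with hTt
  have key : ∀ l : ℕ, Tenn ξ g l * Tt ^ l
      = ∑' k : ℕ, ((k + l).choose l : ℝ≥0∞) * ENNReal.ofReal (ξ (k + l)) * G ^ k * Tt ^ l :=
    fun l => (ENNReal.tsum_mul_right).symm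
  simp only [key]
  set f : ℕ × ℕ → ℝ≥0∞ := fun q =>
    ((q.2 + q.1).choose q.1 : ℝ≥0∞) * ENNReal.ofReal (ξ (q.2 + q.1)) * G ^ q.2 * Tt ^ q.1 with hf
  have h1 : ∑' l : ℕ, ∑' k : ℕ,
      ((k + l).choose l : ℝ≥0∞) * ENNReal.ofReal (ξ (k + l)) * G ^ k * Tt ^ l
      = ∑' q : ℕ × ℕ, f q := (ENNReal.tsum_prod' (f := f)).symm
  rw [h1, ← Finset.HasAntidiagonal.sigmaAntidiagonalEquivProd.tsum_eq f, ENNReal.tsum_sigma']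
  congr 1
  funext n
  simp only [Finset.HasAntidiagonal.sigmaAntidiagonalEquivProd_apply]
  rw [Finset.tsum_subtype (antidiagonal n) f, Finset.Nat.sum_antidiagonal_eq_sum_range_succ_mk]
  have hadd : ENNReal.ofReal (g + t) = Tt + G := by
    rw [ENNReal.ofReal_add hg ht, add_comm]
  rw [hadd, add_pow]
  rw [Finset.mul_sum]
  apply Finset.sum_congr rfl
  intro l hl
  have hln : l ≤ n := Nat.lt_succ_iff.mp (Finset.mem_range.mp hl)
  simp only [hf]
  rw [Nat.sub_add_cancel hln]
  ring

lemma pgfDeriv_eq_tenn (ξ : ℕ → ℝ) (hnn : ∀ k, 0 ≤ ξ k) (g : ℝ) (hg : 0 ≤ g) (l : ℕ) :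
    pgfDeriv ξ l g = (Nat.factorial l : ℝ) * (Tenn ξ g l).toReal := by
  have hterm : ∀ k : ℕ, ((k + l).choose l : ℝ≥0∞) * ENNReal.ofReal (ξ (k + l)) *
      ENNReal.ofReal g ^ k ≠ ⊤ := by
    intro k
    exact ENNReal.mul_ne_top (ENNReal.mul_ne_top (ENNReal.natCast_ne_top _)
      ENNReal.ofReal_ne_top) (ENNReal.pow_ne_top ENNReal.ofReal_ne_top)
  have htr : (Tenn ξ g l).toReal
      = ∑' k : ℕ, ((k + l).choose l : ℝ) * ξ (k + l) * g ^ k := by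
    rw [Tenn, ENNReal.tsum_toReal_eq hterm]
    congr 1
    funext k
    rw [ENNReal.toReal_mul, ENNReal.toReal_mul, ENNReal.toReal_pow]
    simp [ENNReal.toReal_ofReal (hnn _), ENNReal.toReal_ofReal hg]
  have hfact : ∀ k : ℕ, ((Nat.factorial (k + l) : ℝ) / (Nat.factorial k : ℝ))
      = (Nat.factorial l : ℝ) * ((k + l).choose l : ℝ) := by
    intro k
    have h := Nat.choose_mul_factorial_mul_factorial (Nat.le_add_left l k)
    rw [Nat.add_sub_cancel] at h
    have hk : (Nat.factorial k : ℝ) ≠ 0 := Nat.cast_ne_zero.mpr (Nat.factorial_ne_zero k)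
    field_simp
    rw [← Nat.cast_mul, ← Nat.cast_mul, ← h]
    push_cast
    ring
  rw [pgfDeriv, htr, ← tsum_mul_left]
  congr 1
  funext k
  rw [hfact k]
  ring

lemma pgf_eq_toReal (ξ : ℕ → ℝ) (hnn : ∀ k, 0 ≤ ξ k) (x : ℝ) (hx : 0 ≤ x) :
    pgf ξ x = (∑' n : ℕ, ENNReal.ofReal (ξ n) * ENNReal.ofReal x ^ n).toReal := by
  rw [pgf, ENNReal.tsum_toReal_eq (fun n => ENNReal.mul_ne_top ENNReal.ofReal_ne_top
    (ENNReal.pow_ne_top ENNReal.ofReal_ne_top))]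
  congr 1
  funext n
  rw [ENNReal.toReal_mul, ENNReal.toReal_pow, ENNReal.toReal_ofReal (hnn _),
    ENNReal.toReal_ofReal hx]

lemma enn_bound (ξ : ℕ → ℝ) (hnn : ∀ k, 0 ≤ ξ k) (hsum : (∑' k : ℕ, ξ k) = 1)
    (x : ℝ) (hx1 : x ≤ 1) :
    ∑' n : ℕ, ENNReal.ofReal (ξ n) * ENNReal.ofReal x ^ n ≤ 1 := by
  have hsξ : Summable ξ := by
    by_contra h
    rw [tsum_eq_zero_of_not_summable h] at hsum
    norm_num at hsum
  have h1 : ∑' n : ℕ, ENNReal.ofReal (ξ n) = 1 := by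
    rw [← ENNReal.ofReal_tsum_of_nonneg hnn hsξ, hsum, ENNReal.ofReal_one]
  calc ∑' n : ℕ, ENNReal.ofReal (ξ n) * ENNReal.ofReal x ^ n
      ≤ ∑' n : ℕ, ENNReal.ofReal (ξ n) := by
        apply ENNReal.tsum_le_tsum
        intro n
        have hxle : ENNReal.ofReal x ≤ 1 := by
          rw [← ENNReal.ofReal_one]
          exact ENNReal.ofReal_le_ofReal hx1
        calc ENNReal.ofReal (ξ n) * ENNReal.ofReal x ^ n
            ≤ ENNReal.ofReal (ξ n) * 1 := mul_le_mul_right (pow_le_one' hxle n) _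
          _ = ENNReal.ofReal (ξ n) := mul_one _
    _ = 1 := h1

lemma tenn_ne_top (ξ : ℕ → ℝ) (hnn : ∀ k, 0 ≤ ξ k) (hsum : (∑' k : ℕ, ξ k) = 1)
    (g : ℝ) (hg0 : 0 ≤ g) (hg1 : g < 1) (l : ℕ) : Tenn ξ g l ≠ ⊤ := by
  have htot : ∑' l : ℕ, Tenn ξ g l * ENNReal.ofReal (1 - g) ^ l ≤ 1 := by
    rw [taylor_enn ξ g (1 - g) hg0 (by linarith)]
    have : g + (1 - g) = 1 := by ring
    rw [this]
    exact enn_bound ξ hnn hsum 1 le_rfl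
  have hle : Tenn ξ g l * ENNReal.ofReal (1 - g) ^ l ≤ 1 :=
    le_trans (ENNReal.le_tsum l) htot
  intro h
  rw [h] at hle
  have hne : ENNReal.ofReal (1 - g) ^ l ≠ 0 := by
    apply pow_ne_zero
    simp only [ne_eq, ENNReal.ofReal_eq_zero, not_le]
    linarith
  rw [ENNReal.top_mul hne] at hle
  exact (by simp : ¬ (⊤ : ℝ≥0∞) ≤ 1) hle

/-- Let `ξ` be a probability distribution on `ℕ` with `ξ(1)=0`, `ξ(0)>0`, and let
`p, g ∈ (0,1)` satisfy `g = φ(g) - ξ(0)(1-p)` and `φ'(g) < 1`. Then `ξ_b` is a probability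
distribution on `ℕ` with generating function
`φ_b(s) = s + (φ(g + s(1-g)) - g - s(1-g))/((1-g)(1-φ'(g)))` on `[0,1]`. -/
theorem xib_prob_and_pgf (ξ : ℕ → ℝ) (hnn : ∀ k, 0 ≤ ξ k) (hsum : (∑' k : ℕ, ξ k) = 1)
    (h1 : ξ 1 = 0) (h0 : 0 < ξ 0) (p g : ℝ) (hp : p ∈ Set.Ioo (0 : ℝ) 1)
    (hg : g ∈ Set.Ioo (0 : ℝ) 1) (hfix : g = pgf ξ g - ξ 0 * (1 - p))
    (hd : pgfDeriv ξ 1 g < 1) :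
    (∀ l : ℕ, 0 ≤ xib ξ p g l) ∧
    Summable (xib ξ p g) ∧ (∑' l : ℕ, xib ξ p g l) = 1 ∧
    ∀ s ∈ Set.Icc (0 : ℝ) 1,
      (∑' l : ℕ, xib ξ p g l * s ^ l)
        = s + (pgf ξ (g + s * (1 - g)) - g - s * (1 - g))
            / ((1 - g) * (1 - pgfDeriv ξ 1 g)) := by
  obtain ⟨hp0, hp1⟩ := hp
  obtain ⟨hg0, hg1⟩ := hg
  have hg0' : (0:ℝ) ≤ g := le_of_lt hg0
  have h1g : (0:ℝ) < 1 - g := by linarith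
  have hdpos : (0:ℝ) < 1 - pgfDeriv ξ 1 g := by linarith
  set c : ℝ := (1 - g) * (1 - pgfDeriv ξ 1 g) with hc
  have hcpos : 0 < c := mul_pos h1g hdpos
  have hcne : c ≠ 0 := ne_of_gt hcpos
  have hDnn : ∀ l, 0 ≤ pgfDeriv ξ l g := by
    intro l
    apply tsum_nonneg
    intro k
    have h1' := hnn (k + l)
    have h2' : (0:ℝ) ≤ ((k+l).factorial : ℝ) / (k.factorial : ℝ) := by positivity
    have h3' : (0:ℝ) ≤ g ^ k := pow_nonneg hg0' k
    positivity
  have part1 : ∀ l : ℕ, 0 ≤ xib ξ p g l := by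
    intro l
    match l with
    | 0 =>
      exact div_nonneg (mul_nonneg (hnn 0) (by linarith)) hcpos.le
    | 1 => exact le_rfl
    | (l + 2) =>
      exact div_nonneg (mul_nonneg (hDnn _) (pow_nonneg h1g.le _))
        (mul_nonneg (Nat.cast_nonneg _) hdpos.le)
  -- key computation for s ∈ [0,1]
  have key : ∀ s : ℝ, 0 ≤ s → s ≤ 1 →
      Summable (fun l => xib ξ p g l * s ^ l) ∧
      (∑' l : ℕ, xib ξ p g l * s ^ l)
        = s + (pgf ξ (g + s * (1 - g)) - g - s * (1 - g)) / c := by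
    intro s hs0 hs1
    set t : ℝ := s * (1 - g) with htdef
    have ht0 : 0 ≤ t := mul_nonneg hs0 h1g.le
    have hgt1 : g + t ≤ 1 := by
      have : t ≤ 1 - g := by
        calc t = s * (1-g) := rfl
          _ ≤ 1 * (1-g) := mul_le_mul_of_nonneg_right hs1 h1g.le
          _ = 1 - g := one_mul _
      linarith
    have htay := taylor_enn ξ g t hg0' ht0
    have hEle : ∑' n : ℕ, ENNReal.ofReal (ξ n) * ENNReal.ofReal (g + t) ^ n ≤ 1 :=
      enn_bound ξ hnn hsum (g + t) hgt1
    have hEfin : ∑' l : ℕ, Tenn ξ g l * ENNReal.ofReal t ^ l ≠ ⊤ := by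
      rw [htay]
      exact ne_top_of_le_ne_top ENNReal.one_ne_top hEle
    have htne : ∀ l, Tenn ξ g l ≠ ⊤ := tenn_ne_top ξ hnn hsum g hg0' hg1
    have hterm_ne : ∀ l : ℕ, Tenn ξ g l * ENNReal.ofReal t ^ l ≠ ⊤ := fun l =>
      ENNReal.mul_ne_top (htne l) (ENNReal.pow_ne_top ENNReal.ofReal_ne_top)
    set V : ℕ → ℝ := fun l => (Tenn ξ g l).toReal * t ^ l with hV
    have hVterm : ∀ l, (Tenn ξ g l * ENNReal.ofReal t ^ l).toReal = V l := by
      intro l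
      rw [ENNReal.toReal_mul, ENNReal.toReal_pow, ENNReal.toReal_ofReal ht0]
    have hVsum : Summable V := by
      apply Summable.congr (ENNReal.summable_toReal hEfin)
      exact hVterm
    have hVt : ∑' l : ℕ, V l = pgf ξ (g + t) := by
      rw [← tsum_congr hVterm, ← ENNReal.tsum_toReal_eq hterm_ne, htay,
        ← pgf_eq_toReal ξ hnn (g + t) (by linarith)]
    -- W l = c * (xib l * s^l)
    set W : ℕ → ℝ := fun l => c * (xib ξ p g l * s ^ l) with hW
    have hW2 : ∀ l : ℕ, W (l + 2) = V (l + 2) := by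
      intro l
      have hD := pgfDeriv_eq_tenn ξ hnn g hg0' (l + 2)
      have hfne : ((l+2).factorial : ℝ) ≠ 0 := Nat.cast_ne_zero.mpr (Nat.factorial_ne_zero _)
      have hdne : (1 - pgfDeriv ξ 1 g) ≠ 0 := ne_of_gt hdpos
      show c * (xib ξ p g (l + 2) * s ^ (l + 2)) = (Tenn ξ g (l+2)).toReal * t ^ (l + 2)
      rw [show xib ξ p g (l + 2) = pgfDeriv ξ (l + 2) g * (1 - g) ^ (l + 1) /
          ((Nat.factorial (l + 2) : ℝ) * (1 - pgfDeriv ξ 1 g)) from rfl, hD, hc, htdef]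
      rw [mul_pow s (1 - g) (l + 2)]
      field_simp
      ring
    have hVshift : Summable (fun l : ℕ => V (l + 2)) := by
      exact (summable_nat_add_iff 2).mpr hVsum
    have hWshift : Summable (fun l : ℕ => W (l + 2)) := hVshift.congr (fun l => (hW2 l).symm)
    have hWsum : Summable W := (summable_nat_add_iff 2).mp hWshift
    have hXsum : Summable (fun l => xib ξ p g l * s ^ l) := by
      apply Summable.congr (hWsum.div_const c)
      intro l
      show W l / c = xib ξ p g l * s ^ l
      rw [hW]
      field_simp
    constructor
    · exact hXsum
    -- evaluate values
    have hW0 : W 0 = ξ 0 * (1 - p) := by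
      show c * (xib ξ p g 0 * s ^ 0) = ξ 0 * (1 - p)
      rw [show xib ξ p g 0 = ξ 0 * (1 - p) / ((1 - g) * (1 - pgfDeriv ξ 1 g)) from rfl, ← hc]
      field_simp
    have hW1 : W 1 = 0 := by
      show c * (xib ξ p g 1 * s ^ 1) = 0
      rw [show xib ξ p g 1 = 0 from rfl]
      ring
    have hV0 : V 0 = pgf ξ g := by
      have hD := pgfDeriv_eq_tenn ξ hnn g hg0' 0
      have hpg : pgf ξ g = pgfDeriv ξ 0 g := by
        rw [pgf, pgfDeriv]
        apply tsum_congr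
        intro k
        have hk : ((k + 0).factorial : ℝ) / (k.factorial : ℝ) = 1 := by
          rw [Nat.add_zero]
          exact div_self (Nat.cast_ne_zero.mpr (Nat.factorial_ne_zero k))
        rw [hk, one_mul, Nat.add_zero]
      rw [hpg, hD]
      simp [hV]
    have hV1 : V 1 = pgfDeriv ξ 1 g * t := by
      have hD := pgfDeriv_eq_tenn ξ hnn g hg0' 1
      rw [hV]
      simp only [pow_one]
      rw [hD]
      simp
    have hVsplit : ∑' l : ℕ, V l = V 0 + V 1 + ∑' l : ℕ, V (l + 2) := by
      rw [Summable.tsum_eq_zero_add hVsum, Summable.tsum_eq_zero_add ((summable_nat_add_iff 1).mpr hVsum)]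
      simp only [show ∀ b : ℕ, b + 1 + 1 = b + 2 from fun _ => rfl]
      ring
    have hWsplit : ∑' l : ℕ, W l = W 0 + W 1 + ∑' l : ℕ, W (l + 2) := by
      rw [Summable.tsum_eq_zero_add hWsum, Summable.tsum_eq_zero_add ((summable_nat_add_iff 1).mpr hWsum)]
      simp only [show ∀ b : ℕ, b + 1 + 1 = b + 2 from fun _ => rfl]
      ring
    have hWV : ∑' l : ℕ, W (l + 2) = ∑' l : ℕ, V (l + 2) := tsum_congr hW2
    have hWval : ∑' l : ℕ, W l = pgf ξ (g + t) - g - pgfDeriv ξ 1 g * t := by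
      rw [hWsplit, hWV, hW0, hW1]
      have : ∑' l : ℕ, V (l + 2) = pgf ξ (g + t) - V 0 - V 1 := by
        rw [← hVt, hVsplit]; ring
      rw [this, hV0, hV1]
      have hpgfg : pgf ξ g = g + ξ 0 * (1 - p) := by linarith [hfix]
      rw [hpgfg]
      ring
    have hWX : ∑' l : ℕ, W l = c * ∑' l : ℕ, xib ξ p g l * s ^ l := by
      rw [hW, tsum_mul_left]
    have : c * ∑' l : ℕ, xib ξ p g l * s ^ l
        = c * (s + (pgf ξ (g + t) - g - t) / c) := by
      rw [← hWX, hWval]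
      field_simp
      ring
    have hfin := mul_left_cancel₀ hcne this
    rw [hfin, htdef]
  refine ⟨part1, ?_, ?_, ?_⟩
  · have h := (key 1 zero_le_one le_rfl).1
    apply h.congr
    intro l
    simp
  · have h := (key 1 zero_le_one le_rfl).2
    have heq : (∑' l : ℕ, xib ξ p g l) = ∑' l : ℕ, xib ξ p g l * 1 ^ l := by
      apply tsum_congr; intro l; simp
    rw [heq, h]
    have hpg1 : pgf ξ (g + 1 * (1 - g)) = 1 := by
      have : g + 1 * (1 - g) = 1 := by ring
      rw [this, pgf]
      simp [hsum]
    rw [hpg1]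
    field_simp
    ring
  · intro s hs
    exact (key s hs.1 hs.2).2
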